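/- Let Γ be a signed graph with a non-negative unit eigenvector x for its largest eigenvalue λ₁(Γ). If Γ′ is obtained from Γ by reversing the sign of some negative edges (changing them to positive), then λ₁(Γ′) ≥ λ₁(Γ), with equality only if x vanishes at every endpoint of every reversed edge. -/

import Mathlib

open Matrix

lemma psd_of_eigen_le {n : ℕ} (B : Matrix (Fin n) (Fin n) ℝ) (hB : B.IsHermitian) (c : ℝ)
    (hc : ∀ i, hB.eigenvalues i ≤ c) :
    (c • (1 : Matrix (Fin n) (Fin n) ℝ) - B).PosSemidef := by
  have key : c • (1 : Matrix (Fin n) (Fin n) ℝ) - B =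
      (hB.eigenvectorUnitary : Matrix (Fin n) (Fin n) ℝ) *
        diagonal (fun i => c - hB.eigenvalues i) *
        star (hB.eigenvectorUnitary : Matrix (Fin n) (Fin n) ℝ) := by
    have hd : diagonal (fun i => c - hB.eigenvalues i) =
        c • (1 : Matrix (Fin n) (Fin n) ℝ) - diagonal (RCLike.ofReal ∘ hB.eigenvalues) := by
      ext i j
      by_cases h : i = j <;> simp [h, Matrix.one_apply, Matrix.diagonal_apply]
    rw [hd, Matrix.mul_sub, Matrix.sub_mul, Matrix.mul_smul, Matrix.mul_one, Matrix.smul_mul]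
    have hU : (hB.eigenvectorUnitary : Matrix (Fin n) (Fin n) ℝ) *
        star (hB.eigenvectorUnitary : Matrix (Fin n) (Fin n) ℝ) = 1 :=
      (Matrix.mem_unitaryGroup_iff).mp hB.eigenvectorUnitary.2
    rw [hU]
    conv_lhs => rw [hB.spectral_theorem]
    simp only [Unitary.conjStarAlgAut_apply, Unitary.coe_star]
  rw [key, Matrix.star_eq_conjTranspose]
  exact (Matrix.PosSemidef.diagonal (fun i => sub_nonneg.mpr (hc i))).mul_mul_conjTranspose_same _

/-- The largest eigenvalue (index) of a real symmetric matrix. -/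
noncomputable def lam1 {n : ℕ} (A : Matrix (Fin n) (Fin n) ℝ) (hA : A.IsHermitian) : ℝ :=
  ⨆ i, hA.eigenvalues i

/-- Let `Γ` (adjacency matrix `A`) have a non-negative unit eigenvector `x` for `λ₁(Γ)`.
If `Γ′` (adjacency matrix `A′`) is obtained from `Γ` by reversing the signs of some negative
edges (changing entries `−1` to `+1`), then `λ₁(Γ′) ≥ λ₁(Γ)`, with equality only if `x`
vanishes at both endpoints of every reversed edge. -/
theorem stmt6 {n : ℕ} (A A' : Matrix (Fin n) (Fin n) ℝ)
    (hA : A.IsHermitian) (hA' : A'.IsHermitian)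
    (hdiag : ∀ i, A i i = 0)
    (hent : ∀ i j, A i j = -1 ∨ A i j = 0 ∨ A i j = 1)
    (hchange : ∀ i j, A' i j = A i j ∨ (A i j = -1 ∧ A' i j = 1))
    (x : Fin n → ℝ) (hx : ∀ i, 0 ≤ x i) (hunit : ∑ i, x i ^ 2 = 1)
    (heig : A.mulVec x = lam1 A hA • x) :
    lam1 A hA ≤ lam1 A' hA' ∧
      (lam1 A' hA' = lam1 A hA → ∀ i j, A' i j ≠ A i j → x i = 0 ∧ x j = 0) := by
  classical
  set L := lam1 A hA with hLdef
  set L' := lam1 A' hA' with hL'def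
  -- positive semidefiniteness of L' • 1 - A'
  have hpsd : (L' • (1 : Matrix (Fin n) (Fin n) ℝ) - A').PosSemidef :=
    psd_of_eigen_le A' hA' L' (fun i => le_ciSup (Finite.bddAbove_range _) i)
  have hxx : x ⬝ᵥ x = 1 := by
    simpa [dotProduct, pow_two] using hunit
  have hAx : x ⬝ᵥ A *ᵥ x = L := by
    rw [heig, dotProduct_smul, smul_eq_mul, hxx, mul_one]
  -- entrywise difference is nonnegative
  have hdnn : ∀ i j, 0 ≤ A' i j - A i j := by
    intro i j
    rcases hchange i j with h | ⟨h1, h2⟩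
    · simp [h]
    · rw [h1, h2]; norm_num
  have hterm : ∀ i j, 0 ≤ x i * ((A' i j - A i j) * x j) := fun i j =>
    mul_nonneg (hx i) (mul_nonneg (hdnn i j) (hx j))
  have hsplit : x ⬝ᵥ (A' - A) *ᵥ x = x ⬝ᵥ A' *ᵥ x - x ⬝ᵥ A *ᵥ x := by
    rw [Matrix.sub_mulVec, dotProduct_sub]
  have hmono : x ⬝ᵥ A *ᵥ x ≤ x ⬝ᵥ A' *ᵥ x := by
    have h0 : 0 ≤ x ⬝ᵥ (A' - A) *ᵥ x := by
      apply Finset.sum_nonneg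
      intro i _
      have hi : ((A' - A) *ᵥ x) i = ∑ j, (A' i j - A i j) * x j := by
        simp [Matrix.mulVec, dotProduct, Matrix.sub_apply]
      rw [hi, Finset.mul_sum]
      exact Finset.sum_nonneg fun j _ => by simpa [mul_assoc] using hterm i j
    linarith [hsplit]
  -- Rayleigh bound for A'
  have hqform : x ⬝ᵥ (L' • (1 : Matrix (Fin n) (Fin n) ℝ) - A') *ᵥ x = L' - x ⬝ᵥ A' *ᵥ x := by
    rw [Matrix.sub_mulVec, dotProduct_sub, Matrix.smul_mulVec, Matrix.one_mulVec,
      dotProduct_smul, smul_eq_mul, hxx, mul_one]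
  have hray : x ⬝ᵥ A' *ᵥ x ≤ L' := by
    have := hpsd.dotProduct_mulVec_nonneg x
    simp only [star_trivial, RCLike.re_to_real] at this
    rw [hqform] at this
    linarith
  have hle : L ≤ L' := by linarith
  refine ⟨hle, ?_⟩
  intro heq
  -- equality case: x is an eigenvector of A'
  have hAx' : x ⬝ᵥ A' *ᵥ x = L' := by linarith
  have hker : (L' • (1 : Matrix (Fin n) (Fin n) ℝ) - A') *ᵥ x = 0 := by
    refine (hpsd.dotProduct_mulVec_zero_iff x).mp ?_
    rw [star_trivial, hqform, hAx', sub_self]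
  have hA'x : A' *ᵥ x = A *ᵥ x := by
    have h1 : A' *ᵥ x = L' • x := by
      rw [Matrix.sub_mulVec, Matrix.smul_mulVec, Matrix.one_mulVec] at hker
      exact (sub_eq_zero.mp hker).symm
    rw [h1, heq, heig]
  have hsub0 : ∀ i, ∑ j, (A' i j - A i j) * x j = 0 := by
    intro i
    have : ((A' - A) *ᵥ x) i = 0 := by
      rw [Matrix.sub_mulVec, hA'x, sub_self]; rfl
    simpa [Matrix.mulVec, dotProduct, Matrix.sub_apply] using this
  -- for every changed entry, the column endpoint vanishes
  have key : ∀ i j, A' i j ≠ A i j → x j = 0 := by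
    intro i j hne
    have hterm0 : (A' i j - A i j) * x j = 0 := by
      have := (Finset.sum_eq_zero_iff_of_nonneg
        (fun j _ => mul_nonneg (hdnn i j) (hx j))).mp (hsub0 i) j (Finset.mem_univ j)
      exact this
    rcases hchange i j with h | ⟨h1, h2⟩
    · exact absurd h hne
    · rw [h1, h2] at hterm0
      norm_num at hterm0
      exact hterm0
  intro i j hne
  have hsymm : A' j i ≠ A j i := by
    have h1 : A j i = A i j := by
      have := congrFun (congrFun hA.symm i) j
      simpa using this.symm
    have h2 : A' j i = A' i j := by
      have := congrFun (congrFun hA'.symm i) j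
      simpa using this.symm
    rw [h1, h2]; exact hne
  exact ⟨key j i hsymm, key i j hne⟩
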